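/- For C = 1/√30, the set of points x ∈ A_C at which the gradients ∇p₁(x), ∇p₂(x), ∇p₃(x) are linearly dependent consists of exactly 10 points, namely the coordinate permutations of (−2/√30, −2/√30, −2/√30, 3/√30, 3/√30); analogously for C = −1/√30 the 10 singular points are the permutations of (2/√30, 2/√30, 2/√30, −3/√30, −3/√30). -/

import Mathlib

noncomputable section

/-- Power sum `p_k(x) = x₁^k + ⋯ + x₅^k` on `ℝ⁵`. -/
def p (k : ℕ) (x : Fin 5 → ℝ) : ℝ := ∑ i, x i ^ k

/-- The surface `A_C = {x ∈ ℝ⁵ : p₁(x) = 0, p₂(x) = 1, p₃(x) = C}`. -/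
def A (C : ℝ) : Set (Fin 5 → ℝ) := {x | p 1 x = 0 ∧ p 2 x = 1 ∧ p 3 x = C}

/-- The gradient of `p_k`: `∇p_k(x) = (k x₁^{k-1}, …, k x₅^{k-1})`. -/
def grad (k : ℕ) (x : Fin 5 → ℝ) : Fin 5 → ℝ := fun i => (k : ℝ) * x i ^ (k - 1)

/-- The set of coordinate permutations of a point `x₀ ∈ ℝ⁵`. -/
def perms (x₀ : Fin 5 → ℝ) : Set (Fin 5 → ℝ) := {x | ∃ σ : Equiv.Perm (Fin 5), x = x₀ ∘ σ}

/- ## Auxiliary lemmas -/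

lemma sum_split (x : Fin 5 → ℝ) (u v : ℝ) (k : ℕ) (h : ∀ i, x i = u ∨ x i = v) :
    ∑ i, x i ^ k = (5 - ((Finset.univ.filter (fun i => x i = v)).card : ℝ)) * u ^ k
      + ((Finset.univ.filter (fun i => x i = v)).card : ℝ) * v ^ k := by
  classical
  set T := Finset.univ.filter (fun i => x i = v) with hT
  have hsplit := Finset.sum_filter_add_sum_filter_not Finset.univ (fun i => x i = v)
    (fun i => x i ^ k)
  have hTsum : ∑ i ∈ T, x i ^ k = (T.card : ℝ) * v ^ k := by
    rw [Finset.sum_congr rfl (fun i hi => by rw [(Finset.mem_filter.mp hi).2])]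
    simp [mul_comm]
  have hcards : T.card + (Finset.univ.filter (fun i => ¬ x i = v)).card = 5 := by
    rw [hT]; simpa using Finset.card_filter_add_card_filter_not
      (s := (Finset.univ : Finset (Fin 5))) (p := fun i => x i = v)
  have hNsum : ∑ i ∈ Finset.univ.filter (fun i => ¬ x i = v), x i ^ k
      = ((Finset.univ.filter (fun i => ¬ x i = v)).card : ℝ) * u ^ k := by
    rw [Finset.sum_congr rfl (fun i hi => by
      rcases h i with h' | h'
      · rw [h']
      · exact absurd h' (Finset.mem_filter.mp hi).2)]
    simp [mul_comm]
  have hcard5 : T.card ≤ 5 := by omega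
  have : ((Finset.univ.filter (fun i => ¬ x i = v)).card : ℝ) = 5 - (T.card : ℝ) := by
    have : (Finset.univ.filter (fun i => ¬ x i = v)).card = 5 - T.card := by omega
    rw [this]; push_cast [Nat.cast_sub hcard5]; ring
  rw [← hsplit, hTsum, hNsum, this]; ring

lemma quad_roots (g : Fin 3 → ℝ) (t₁ t₂ t₃ : ℝ)
    (e₁ : g 0 + g 1 * (2 * t₁) + g 2 * (3 * t₁ ^ 2) = 0)
    (e₂ : g 0 + g 1 * (2 * t₂) + g 2 * (3 * t₂ ^ 2) = 0)
    (e₃ : g 0 + g 1 * (2 * t₃) + g 2 * (3 * t₃ ^ 2) = 0)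
    (h12 : t₁ ≠ t₂) (h13 : t₁ ≠ t₃) (h23 : t₂ ≠ t₃) :
    ∀ i, g i = 0 := by
  have d12 : t₁ - t₂ ≠ 0 := sub_ne_zero.mpr h12
  have d13 : t₁ - t₃ ≠ 0 := sub_ne_zero.mpr h13
  have d23 : t₂ - t₃ ≠ 0 := sub_ne_zero.mpr h23
  have f12 : (t₁ - t₂) * (2 * g 1 + 3 * g 2 * (t₁ + t₂)) = 0 := by linear_combination e₁ - e₂
  have f13 : (t₁ - t₃) * (2 * g 1 + 3 * g 2 * (t₁ + t₃)) = 0 := by linear_combination e₁ - e₃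
  have f12' : 2 * g 1 + 3 * g 2 * (t₁ + t₂) = 0 := by
    rcases mul_eq_zero.mp f12 with h | h
    · exact absurd h d12
    · exact h
  have f13' : 2 * g 1 + 3 * g 2 * (t₁ + t₃) = 0 := by
    rcases mul_eq_zero.mp f13 with h | h
    · exact absurd h d13
    · exact h
  have g2z : (t₂ - t₃) * (3 * g 2) = 0 := by linear_combination f12' - f13'
  have hg2 : g 2 = 0 := by
    rcases mul_eq_zero.mp g2z with h | h
    · exact absurd h d23
    · linarith
  have hg1 : g 1 = 0 := by rw [hg2] at f12'; linarith
  have hg0 : g 0 = 0 := by rw [hg2, hg1] at e₁; linarith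
  intro i; fin_cases i <;> assumption

lemma dep_of_two_vals (x : Fin 5 → ℝ) (a b : ℝ) (h : ∀ i, x i = a ∨ x i = b) :
    ¬ LinearIndependent ℝ ![grad 1 x, grad 2 x, grad 3 x] := by
  rw [Fintype.not_linearIndependent_iff]
  refine ⟨![a*b, -(a+b)/2, 1/3], ?_, ⟨2, by show (1/3:ℝ) ≠ 0; norm_num⟩⟩
  funext j
  have hj : (x j - a) * (x j - b) = 0 := by
    rcases h j with h' | h' <;> rw [h'] <;> ring
  simp [Fin.sum_univ_three, grad, Pi.add_apply, Pi.smul_apply, smul_eq_mul]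
  linear_combination hj

lemma two_vals_of_dep (x : Fin 5 → ℝ)
    (h : ¬ LinearIndependent ℝ ![grad 1 x, grad 2 x, grad 3 x]) :
    ∃ u v, ∀ i, x i = u ∨ x i = v := by
  rw [Fintype.not_linearIndependent_iff] at h
  obtain ⟨g, hg, i₀, hi₀⟩ := h
  have hq : ∀ j, g 0 + g 1 * (2 * x j) + g 2 * (3 * x j ^ 2) = 0 := by
    intro j
    have := congrFun hg j
    simpa [Fin.sum_univ_three, grad, Pi.add_apply, Pi.smul_apply, smul_eq_mul] using this
  by_contra hcon
  push_neg at hcon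
  by_cases hall : ∀ i, x i = x 0
  · obtain ⟨k, hk1, hk2⟩ := hcon (x 0) (x 0)
    exact hk1 (hall k)
  · push_neg at hall
    obtain ⟨j, hj⟩ := hall
    obtain ⟨k, hk1, hk2⟩ := hcon (x 0) (x j)
    exact hi₀ (quad_roots g (x 0) (x j) (x k) (hq 0) (hq j) (hq k)
      (fun h' => hj h'.symm) (fun h' => hk1 h'.symm) (fun h' => hk2 h'.symm) i₀)

lemma x0_vals (a b : ℝ) (m : Fin 5) : ![a,a,a,b,b] m = a ∨ ![a,a,a,b,b] m = b := by
  fin_cases m <;> simp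

lemma x0_eq_b (a b : ℝ) (hab : a ≠ b) (m : Fin 5) :
    ![a,a,a,b,b] m = b ↔ m = 3 ∨ m = 4 := by
  fin_cases m <;> simp [hab]

lemma mem_perms_iff (a b : ℝ) (hab : a ≠ b) (x : Fin 5 → ℝ) :
    x ∈ perms ![a,a,a,b,b] ↔
      ((∀ i, x i = a ∨ x i = b) ∧ (Finset.univ.filter (fun i => x i = b)).card = 2) := by
  constructor
  · rintro ⟨σ, rfl⟩
    refine ⟨fun i => x0_vals a b (σ i), ?_⟩
    have hfil : Finset.univ.filter (fun i => ![a,a,a,b,b] (σ i) = b)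
        = {σ.symm 3, σ.symm 4} := by
      ext k
      simp only [Finset.mem_filter, Finset.mem_univ, true_and, Finset.mem_insert,
        Finset.mem_singleton, x0_eq_b a b hab, ← Equiv.eq_symm_apply]
    show (Finset.univ.filter (fun i => ![a,a,a,b,b] (σ i) = b)).card = 2
    rw [hfil]
    rw [Finset.card_insert_of_notMem (by simp [Equiv.symm_apply_eq]), Finset.card_singleton]
  · rintro ⟨hvals, hcard⟩
    obtain ⟨i, j, hij, hT⟩ := Finset.card_eq_two.mp hcard
    set τ₁ : Equiv.Perm (Fin 5) := Equiv.swap i 3 with hτ₁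
    set τ₂ : Equiv.Perm (Fin 5) := Equiv.swap (τ₁ j) 4 with hτ₂
    refine ⟨τ₁.trans τ₂, ?_⟩
    have hmemT : ∀ k, x k = b ↔ (k = i ∨ k = j) := by
      intro k
      have : x k = b ↔ k ∈ Finset.univ.filter (fun i => x i = b) := by simp
      rw [this, hT]; simp
    have hj3 : τ₁ j ≠ 3 := by
      rw [hτ₁]
      intro h
      exact hij ((Equiv.injective _ ) (by rw [h, Equiv.swap_apply_left])).symm
    have hσi : (τ₁.trans τ₂) i = 3 := by
      simp only [Equiv.trans_apply, hτ₁, Equiv.swap_apply_left]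
      exact Equiv.swap_apply_of_ne_of_ne (Ne.symm hj3) (by decide)
    have hσj : (τ₁.trans τ₂) j = 4 := by
      simp only [Equiv.trans_apply, hτ₂, Equiv.swap_apply_left]
    funext k
    by_cases hk : x k = b
    · rcases (hmemT k).mp hk with rfl | rfl
      · show x k = ![a,a,a,b,b] ((τ₁.trans τ₂) k)
        rw [hσi]; simpa using hk
      · show x k = ![a,a,a,b,b] ((τ₁.trans τ₂) k)
        rw [hσj]; simpa using hk
    · have hka : x k = a := (hvals k).resolve_right hk
      have hki : k ≠ i := fun h => hk (by rw [h] at *; exact ((hmemT i).mpr (Or.inl rfl)))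
      have hkj : k ≠ j := fun h => hk (by rw [h] at *; exact ((hmemT j).mpr (Or.inr rfl)))
      have h3 : (τ₁.trans τ₂) k ≠ 3 := fun h => hki (Equiv.injective _ (h.trans hσi.symm))
      have h4 : (τ₁.trans τ₂) k ≠ 4 := fun h => hkj (Equiv.injective _ (h.trans hσj.symm))
      have : ¬ (![a,a,a,b,b] ((τ₁.trans τ₂) k) = b) := by
        rw [x0_eq_b a b hab]; tauto
      have := (x0_vals a b ((τ₁.trans τ₂) k)).resolve_right this
      show x k = ![a,a,a,b,b] ((τ₁.trans τ₂) k)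
      rw [this, hka]

lemma ncard_M (a b : ℝ) (hab : a ≠ b) :
    {x : Fin 5 → ℝ | (∀ i, x i = a ∨ x i = b)
      ∧ (Finset.univ.filter (fun i => x i = b)).card = 2}.ncard = 10 := by
  classical
  set f : Finset (Fin 5) → (Fin 5 → ℝ) := fun T i => if i ∈ T then b else a with hf
  have hfil : ∀ T : Finset (Fin 5), Finset.univ.filter (fun i => f T i = b) = T := by
    intro T
    ext i
    simp only [Finset.mem_filter, Finset.mem_univ, true_and, hf]
    split_ifs with h
    · simp [h]
    · simp [h]; exact hab
  have himg : {x : Fin 5 → ℝ | (∀ i, x i = a ∨ x i = b)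
      ∧ (Finset.univ.filter (fun i => x i = b)).card = 2}
      = f '' {T : Finset (Fin 5) | T.card = 2} := by
    ext x
    constructor
    · rintro ⟨hvals, hcard⟩
      refine ⟨Finset.univ.filter (fun i => x i = b), hcard, ?_⟩
      funext i
      simp only [hf]
      split_ifs with h
      · exact ((Finset.mem_filter.mp h).2).symm
      · have : ¬ x i = b := fun hb => h (by simp [hb])
        exact ((hvals i).resolve_right this).symm
    · rintro ⟨T, hT, rfl⟩
      refine ⟨fun i => ?_, by rw [hfil]; exact hT⟩
      simp only [hf]
      split_ifs <;> simp
  rw [himg]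
  rw [Set.ncard_image_of_injOn (fun T _ S _ hTS => by rw [← hfil T, ← hfil S, hTS])]
  have : {T : Finset (Fin 5) | T.card = 2}
      = ↑(Finset.univ.powersetCard 2 : Finset (Finset (Fin 5))) := by
    ext T; simp [Finset.mem_powersetCard]
  rw [this, Set.ncard_coe_finset, Finset.card_powersetCard]
  decide

lemma master (a b C : ℝ) (hab : a ≠ b)
    (h1 : 3*a + 2*b = 0) (h2 : 3*a^2 + 2*b^2 = 1) (h3 : 3*a^3 + 2*b^3 = C)
    (huv : ∀ u v : ℝ, ∀ m : ℕ, 1 ≤ m → m ≤ 4 →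
      (5-(m:ℝ))*u + m*v = 0 → (5-(m:ℝ))*u^2 + m*v^2 = 1 → (5-(m:ℝ))*u^3 + m*v^3 = C →
      (m = 2 ∧ u = a ∧ v = b) ∨ (m = 3 ∧ u = b ∧ v = a)) :
    {x ∈ A C | ¬ LinearIndependent ℝ ![grad 1 x, grad 2 x, grad 3 x]} = perms ![a,a,a,b,b] ∧
    {x ∈ A C | ¬ LinearIndependent ℝ ![grad 1 x, grad 2 x, grad 3 x]}.ncard = 10 := by
  have Seq : {x ∈ A C | ¬ LinearIndependent ℝ ![grad 1 x, grad 2 x, grad 3 x]}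
      = {x : Fin 5 → ℝ | (∀ i, x i = a ∨ x i = b)
        ∧ (Finset.univ.filter (fun i => x i = b)).card = 2} := by
    ext x
    constructor
    · rintro ⟨⟨hp1, hp2, hp3⟩, hdep⟩
      obtain ⟨u, v, hvals⟩ := two_vals_of_dep x hdep
      set m := (Finset.univ.filter (fun i => x i = v)).card with hm
      have E1 : (5 - (m:ℝ)) * u + m * v = 0 := by
        have := sum_split x u v 1 hvals
        simp only [pow_one] at this
        rw [← hm] at this
        unfold p at hp1
        simp only [pow_one] at hp1
        rw [hp1] at this; linarith
      have E2 : (5 - (m:ℝ)) * u^2 + m * v^2 = 1 := by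
        have := sum_split x u v 2 hvals
        rw [← hm] at this
        unfold p at hp2
        rw [hp2] at this; linarith
      have E3 : (5 - (m:ℝ)) * u^3 + m * v^3 = C := by
        have := sum_split x u v 3 hvals
        rw [← hm] at this
        unfold p at hp3
        rw [hp3] at this; linarith
      have hm5 : m ≤ 5 := by
        have := Finset.card_filter_le (Finset.univ : Finset (Fin 5)) (fun i => x i = v)
        simpa using this
      rcases Nat.eq_or_lt_of_le (Nat.zero_le m) with hm0 | hm1
      · exfalso
        rw [← hm0] at E1 E2
        push_cast at E1 E2
        nlinarith [E1, E2]
      rcases Nat.eq_or_lt_of_le hm5 with hm5' | hm4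
      · exfalso
        rw [hm5'] at E1 E2
        push_cast at E1 E2
        nlinarith [E1, E2]
      have hcases := huv u v m hm1 (by omega) E1 E2 E3
      rcases hcases with ⟨hm2, hua, hvb⟩ | ⟨hm3, hub, hva⟩
      · rw [hua, hvb] at hvals
        refine ⟨hvals, ?_⟩
        rw [← hvb, ← hm]
        exact hm2
      · rw [hub, hva] at hvals
        refine ⟨fun i => (hvals i).symm, ?_⟩
        have hfil : Finset.univ.filter (fun i => x i = b)
            = Finset.univ.filter (fun i => ¬ x i = a) := by
          ext i
          simp only [Finset.mem_filter, Finset.mem_univ, true_and]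
          constructor
          · intro hb ha; exact hab (ha ▸ hb ▸ rfl)
          · intro ha; exact (hvals i).resolve_right ha
        rw [hfil]
        have := Finset.card_filter_add_card_filter_not
          (s := (Finset.univ : Finset (Fin 5))) (p := fun i => x i = a)
        simp only [Finset.card_univ, Fintype.card_fin] at this
        have hcard_a : (Finset.univ.filter (fun i => x i = a)).card = 3 := by
          rw [← hva, ← hm]; exact hm3
        omega
    · rintro ⟨hvals, hcard⟩
      have hsum : ∀ k, p k x = 3 * a ^ k + 2 * b ^ k := by
        intro k
        unfold p
        rw [sum_split x a b k hvals, hcard]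
        push_cast; ring
      refine ⟨⟨?_, ?_, ?_⟩, dep_of_two_vals x a b hvals⟩
      · rw [hsum 1]; simpa using h1
      · rw [hsum 2]; exact h2
      · rw [hsum 3]; exact h3
  constructor
  · rw [Seq]; ext x; rw [mem_perms_iff a b hab x]; rfl
  · rw [Seq]; exact ncard_M a b hab

lemma huv_pos : ∀ u v : ℝ, ∀ m : ℕ, 1 ≤ m → m ≤ 4 →
    (5-(m:ℝ))*u + m*v = 0 → (5-(m:ℝ))*u^2 + m*v^2 = 1 →
    (5-(m:ℝ))*u^3 + m*v^3 = 1 / Real.sqrt 30 →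
    (m = 2 ∧ u = -(2 / Real.sqrt 30) ∧ v = 3 / Real.sqrt 30) ∨
    (m = 3 ∧ u = 3 / Real.sqrt 30 ∧ v = -(2 / Real.sqrt 30)) := by
  intro u v m hm1 hm4 e1 e2 e3
  have hs : (0:ℝ) < Real.sqrt 30 := Real.sqrt_pos.mpr (by norm_num)
  have hsne : Real.sqrt 30 ≠ 0 := ne_of_gt hs
  have hs2 : Real.sqrt 30 ^ 2 = 30 := Real.sq_sqrt (by norm_num)
  set s := Real.sqrt 30 with hsdef
  interval_cases m <;> push_cast at e1 e2 e3
  -- m = 1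
  · exfalso
    have hv : v = -4*u := by linarith
    subst hv
    have hu2 : u^2 = 1/20 := by linear_combination (1/20) * e2
    have h3u : -3*u = 1/s := by
      linear_combination e3 + (60*u)*hu2
    have hu : u = -(1/(3*s)) := by
      field_simp at h3u ⊢
      linarith
    rw [hu] at hu2
    have : (1:ℝ)/(9*s^2) = 1/20 := by
      rw [← hu2]; ring
    rw [hs2] at this
    norm_num at this
  -- m = 2
  · left
    have hu : u = -(2/3)*v := by linarith
    subst hu
    have hv2 : v^2 = 3/10 := by linear_combination (3/10) * e2
    have h10 : v * (3/10) = (9/10) * (1/s) := by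
      linear_combination (9/10)*e3 - v*hv2
    have hv : v = 3/s := by
      field_simp at h10 ⊢
      linarith
    refine ⟨rfl, ?_, hv⟩
    rw [hv]; ring
  -- m = 3
  · right
    have hv : v = -(2/3)*u := by linarith
    subst hv
    have hu2 : u^2 = 3/10 := by linear_combination (3/10) * e2
    have h10 : u * (3/10) = (9/10) * (1/s) := by
      linear_combination (9/10)*e3 - u*hu2
    have hu : u = 3/s := by
      field_simp at h10 ⊢
      linarith
    refine ⟨rfl, hu, ?_⟩
    rw [hu]; ring
  -- m = 4
  · exfalso
    have hu : u = -4*v := by linarith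
    subst hu
    have hv2 : v^2 = 1/20 := by linear_combination (1/20) * e2
    have h3v : -3*v = 1/s := by
      linear_combination e3 + (60*v)*hv2
    have hv : v = -(1/(3*s)) := by
      field_simp at h3v ⊢
      linarith
    rw [hv] at hv2
    have : (1:ℝ)/(9*s^2) = 1/20 := by
      rw [← hv2]; ring
    rw [hs2] at this
    norm_num at this

lemma huv_neg : ∀ u v : ℝ, ∀ m : ℕ, 1 ≤ m → m ≤ 4 →
    (5-(m:ℝ))*u + m*v = 0 → (5-(m:ℝ))*u^2 + m*v^2 = 1 →
    (5-(m:ℝ))*u^3 + m*v^3 = -(1 / Real.sqrt 30) →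
    (m = 2 ∧ u = 2 / Real.sqrt 30 ∧ v = -(3 / Real.sqrt 30)) ∨
    (m = 3 ∧ u = -(3 / Real.sqrt 30) ∧ v = 2 / Real.sqrt 30) := by
  intro u v m hm1 hm4 e1 e2 e3
  have h := huv_pos (-u) (-v) m hm1 hm4 (by linarith) (by linear_combination e2)
    (by linear_combination -e3)
  rcases h with ⟨hm2, hua, hvb⟩ | ⟨hm3, hub, hva⟩
  · exact Or.inl ⟨hm2, by linarith, by linarith⟩
  · exact Or.inr ⟨hm3, by linarith, by linarith⟩

theorem stmt_7 :
    ({x ∈ A (1 / Real.sqrt 30) | ¬ LinearIndependent ℝ ![grad 1 x, grad 2 x, grad 3 x]} =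
        perms ![-(2 / Real.sqrt 30), -(2 / Real.sqrt 30), -(2 / Real.sqrt 30), 3 / Real.sqrt 30,
          3 / Real.sqrt 30] ∧
      {x ∈ A (1 / Real.sqrt 30) |
        ¬ LinearIndependent ℝ ![grad 1 x, grad 2 x, grad 3 x]}.ncard = 10) ∧
    ({x ∈ A (-(1 / Real.sqrt 30)) | ¬ LinearIndependent ℝ ![grad 1 x, grad 2 x, grad 3 x]} =
        perms ![2 / Real.sqrt 30, 2 / Real.sqrt 30, 2 / Real.sqrt 30, -(3 / Real.sqrt 30),
          -(3 / Real.sqrt 30)] ∧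
      {x ∈ A (-(1 / Real.sqrt 30)) |
        ¬ LinearIndependent ℝ ![grad 1 x, grad 2 x, grad 3 x]}.ncard = 10) := by
  have hs : (0:ℝ) < Real.sqrt 30 := Real.sqrt_pos.mpr (by norm_num)
  have hsne : Real.sqrt 30 ≠ 0 := ne_of_gt hs
  have hs2 : Real.sqrt 30 ^ 2 = 30 := Real.sq_sqrt (by norm_num)
  constructor
  · refine master (-(2 / Real.sqrt 30)) (3 / Real.sqrt 30) (1 / Real.sqrt 30) ?_ (by ring) ?_ ?_
      huv_pos
    · intro h
      have h2 : (2:ℝ) / Real.sqrt 30 > 0 := by positivity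
      have h3 : (3:ℝ) / Real.sqrt 30 > 0 := by positivity
      linarith
    · field_simp
      linarith [hs2]
    · field_simp
      linear_combination (-1) * hs2
  · refine master (2 / Real.sqrt 30) (-(3 / Real.sqrt 30)) (-(1 / Real.sqrt 30)) ?_ (by ring)
      ?_ ?_ huv_neg
    · intro h
      have h2 : (2:ℝ) / Real.sqrt 30 > 0 := by positivity
      have h3 : (3:ℝ) / Real.sqrt 30 > 0 := by positivity
      linarith
    · field_simp
      linarith [hs2]
    · field_simp
      linear_combination hs2
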